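/- Let N ≥ 2, K ≥ 2, γ > 0, p > 0, and let y_{k,n} (for k = 1,…,K−1 and n = 1,…,N) satisfy 0 ≤ γ y_{k,n}/p ≤ 1. Define w_{1,n} = 1, w_{k+1,n} = w_{k,n}·exp(γ y_{k,n}/p), W_k = Σ_{n=1}^N w_{k,n}, and q_{k,n} = w_{k,n}/W_k. Then for every expert n ∈ {1,…,N}: Σ_{k=1}^{K−1} y_{k,n} − ((e−2)γ/p)·Σ_{k=1}^{K−1} Σ_{m=1}^N q_{k,m} y_{k,m}² − (p ln N)/γ ≤ Σ_{k=1}^{K−1} Σ_{m=1}^N q_{k,m} y_{k,m}. -/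

import Mathlib

lemma exp_le_quad {x : ℝ} (hx0 : 0 ≤ x) (hx1 : x ≤ 1) :
    Real.exp x ≤ 1 + x + (Real.exp 1 - 2) * x ^ 2 := by
  have hrepr : ∀ t : ℝ, Real.exp t = 1 + t + ∑' n : ℕ, t ^ (n + 2) / (Nat.factorial (n + 2) : ℝ) := by
    intro t
    have h : Real.exp t = ∑' n : ℕ, t ^ n / (Nat.factorial n : ℝ) := by
      rw [Real.exp_eq_exp_ℝ, NormedSpace.exp_eq_tsum_div]
    have hs : Summable (fun n : ℕ => t ^ n / (Nat.factorial n : ℝ)) := Real.summable_pow_div_factorial t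
    rw [h, Summable.tsum_eq_zero_add hs, Summable.tsum_eq_zero_add ((summable_nat_add_iff 1).2 hs)]
    simp [Nat.factorial]
    ring
  have h1 : Real.exp 1 - 2 = ∑' n : ℕ, (1:ℝ) ^ (n + 2) / (Nat.factorial (n + 2) : ℝ) := by
    rw [hrepr 1]; ring
  rw [hrepr x, h1]
  have hs : ∀ t : ℝ, Summable (fun n : ℕ => t ^ (n + 2) / (Nat.factorial (n + 2) : ℝ)) := by
    intro t
    exact (summable_nat_add_iff 2).2 (Real.summable_pow_div_factorial t)
  have hle : ∑' n : ℕ, x ^ (n + 2) / (Nat.factorial (n + 2) : ℝ) ≤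
      ∑' n : ℕ, x ^ 2 * ((1:ℝ) ^ (n + 2) / (Nat.factorial (n + 2) : ℝ)) := by
    apply Summable.tsum_le_tsum _ (hs x) ((hs 1).mul_left _)
    intro n
    rw [one_pow, mul_div_assoc', mul_one]
    apply div_le_div_of_nonneg_right _ (by positivity)
    exact pow_le_pow_of_le_one hx0 hx1 (by omega)
  rw [tsum_mul_left] at hle
  nlinarith [hle]

theorem exp4_combined_weight_bound (N K : ℕ) (hN : 2 ≤ N) (hK : 2 ≤ K)
    (γ p : ℝ) (hγ : 0 < γ) (hp : 0 < p)
    (y : ℕ → Fin N → ℝ)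
    (hy : ∀ k ∈ Finset.Ico 1 K, ∀ n, 0 ≤ γ * y k n / p ∧ γ * y k n / p ≤ 1)
    (w : ℕ → Fin N → ℝ)
    (hw1 : ∀ n, w 1 n = 1)
    (hwrec : ∀ k ∈ Finset.Ico 1 K, ∀ n, w (k + 1) n = w k n * Real.exp (γ * y k n / p))
    (W : ℕ → ℝ) (hW : ∀ k, W k = ∑ n, w k n)
    (q : ℕ → Fin N → ℝ) (hq : ∀ k n, q k n = w k n / W k) :
    ∀ n : Fin N,
      (∑ k ∈ Finset.Ico 1 K, y k n)
          - ((Real.exp 1 - 2) * γ / p) * ∑ k ∈ Finset.Ico 1 K, ∑ m, q k m * y k m ^ 2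
          - p * Real.log N / γ
        ≤ ∑ k ∈ Finset.Ico 1 K, ∑ m, q k m * y k m := by
  intro n
  have hNe : Nonempty (Fin N) := ⟨⟨0, by omega⟩⟩
  set c : ℝ := Real.exp 1 - 2 with hc
  have hc0 : 0 ≤ c := by
    have := Real.add_one_le_exp (1 : ℝ)
    simp only [hc]; linarith
  -- explicit formula for weights
  have hwE : ∀ k, 1 ≤ k → k ≤ K → ∀ m,
      w k m = Real.exp (∑ j ∈ Finset.Ico 1 k, γ * y j m / p) := by
    intro k
    induction k with
    | zero => omega
    | succ k ih =>
      intro h1 h2 m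
      rcases Nat.eq_zero_or_pos k with hk0 | hk1
      · subst hk0; simp [hw1]
      · have hkK : k ∈ Finset.Ico 1 K := Finset.mem_Ico.mpr ⟨hk1, by omega⟩
        rw [hwrec k hkK m, ih hk1 (by omega) m, ← Real.exp_add,
          Finset.sum_Ico_succ_top (by omega)]
  have hwpos : ∀ k, 1 ≤ k → k ≤ K → ∀ m, 0 < w k m := by
    intro k h1 h2 m; rw [hwE k h1 h2 m]; exact Real.exp_pos _
  have hWpos : ∀ k, 1 ≤ k → k ≤ K → 0 < W k := by
    intro k h1 h2
    rw [hW k]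
    exact Finset.sum_pos (fun m _ => hwpos k h1 h2 m) Finset.univ_nonempty
  -- per-step upper bound
  have hstep : ∀ k ∈ Finset.Ico 1 K,
      Real.log (W (k + 1)) ≤ Real.log (W k)
        + ((γ / p) * ∑ m, q k m * y k m + c * (γ / p) ^ 2 * ∑ m, q k m * y k m ^ 2) := by
    intro k hk
    obtain ⟨hk1, hk2⟩ := Finset.mem_Ico.mp hk
    have hWk := hWpos k hk1 (le_of_lt hk2)
    have hWk1 := hWpos (k + 1) (by omega) (by omega)
    set S : ℝ := (γ / p) * ∑ m, q k m * y k m + c * (γ / p) ^ 2 * ∑ m, q k m * y k m ^ 2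
      with hS
    have hsum1 : ∑ m, q k m * y k m = (∑ m, w k m * y k m) / W k := by
      simp only [hq, div_mul_eq_mul_div]
      rw [← Finset.sum_div]
    have hsum2 : ∑ m, q k m * y k m ^ 2 = (∑ m, w k m * y k m ^ 2) / W k := by
      simp only [hq, div_mul_eq_mul_div]
      rw [← Finset.sum_div]
    have h1 : W (k + 1) ≤ W k * (1 + S) := by
      rw [hW (k + 1)]
      calc ∑ m, w (k + 1) m = ∑ m, w k m * Real.exp (γ * y k m / p) := by
            exact Finset.sum_congr rfl fun m _ => hwrec k hk m
        _ ≤ ∑ m, w k m * (1 + γ * y k m / p + c * (γ * y k m / p) ^ 2) := by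
            refine Finset.sum_le_sum fun m _ => ?_
            exact mul_le_mul_of_nonneg_left
              (exp_le_quad (hy k hk m).1 (hy k hk m).2) (hwpos k hk1 hk2.le m).le
        _ = ∑ m, (w k m + (γ / p) * (w k m * y k m)
              + c * (γ / p) ^ 2 * (w k m * y k m ^ 2)) := by
            refine Finset.sum_congr rfl fun m _ => ?_
            field_simp
        _ = W k + (γ / p) * ∑ m, w k m * y k m
              + c * (γ / p) ^ 2 * ∑ m, w k m * y k m ^ 2 := by
            rw [Finset.sum_add_distrib, Finset.sum_add_distrib, ← Finset.mul_sum,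
              ← Finset.mul_sum, hW k]
        _ = W k * (1 + S) := by
            rw [hS, hsum1, hsum2]
            field_simp
            ring
    have h2 : W k * (1 + S) ≤ W k * Real.exp S := by
      refine mul_le_mul_of_nonneg_left ?_ hWk.le
      linarith [Real.add_one_le_exp S]
    have h3 : Real.log (W (k + 1)) ≤ Real.log (W k * Real.exp S) :=
      Real.log_le_log hWk1 (h1.trans h2)
    rwa [Real.log_mul hWk.ne' (Real.exp_ne_zero S), Real.log_exp] at h3
  -- telescoping
  have htel : Real.log (W K) - Real.log (W 1)
      ≤ ∑ k ∈ Finset.Ico 1 K, ((γ / p) * ∑ m, q k m * y k m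
          + c * (γ / p) ^ 2 * ∑ m, q k m * y k m ^ 2) := by
    have key : Real.log (W K) - Real.log (W 1)
        = ∑ k ∈ Finset.Ico 1 K, (Real.log (W (k + 1)) - Real.log (W k)) := by
      have h0 := Finset.sum_range_sub (fun i => Real.log (W (i + 1))) (K - 1)
      simp only [show K - 1 + 1 = K by omega, Nat.zero_add] at h0
      have h2 : ∑ k ∈ Finset.range (K - 1),
          (Real.log (W (1 + k + 1)) - Real.log (W (1 + k)))
          = ∑ i ∈ Finset.range (K - 1), (Real.log (W (i + 1 + 1)) - Real.log (W (i + 1))) :=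
        Finset.sum_congr rfl fun i _ => by rw [Nat.add_comm 1 i]
      rw [Finset.sum_Ico_eq_sum_range, h2, h0]
    rw [key]
    refine Finset.sum_le_sum fun k hk => ?_
    linarith [hstep k hk]
  -- lower bound on log W K
  have hlow : ∑ k ∈ Finset.Ico 1 K, γ * y k n / p ≤ Real.log (W K) := by
    have hwK : w K n = Real.exp (∑ k ∈ Finset.Ico 1 K, γ * y k n / p) :=
      hwE K (by omega) le_rfl n
    have hle : w K n ≤ W K := by
      rw [hW K]
      exact Finset.single_le_sum (fun m _ => (hwpos K (by omega) le_rfl m).le)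
        (Finset.mem_univ n)
    calc ∑ k ∈ Finset.Ico 1 K, γ * y k n / p = Real.log (w K n) := by
          rw [hwK, Real.log_exp]
      _ ≤ Real.log (W K) := Real.log_le_log (hwpos K (by omega) le_rfl n) hle
  -- log W 1 = log N
  have hW1 : Real.log (W 1) = Real.log N := by
    rw [hW 1]
    simp [hw1]
  -- assemble
  set A : ℝ := ∑ k ∈ Finset.Ico 1 K, ∑ m, q k m * y k m with hA
  set C : ℝ := ∑ k ∈ Finset.Ico 1 K, ∑ m, q k m * y k m ^ 2 with hC
  set B : ℝ := ∑ k ∈ Finset.Ico 1 K, y k n with hB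
  have hsumS : ∑ k ∈ Finset.Ico 1 K, ((γ / p) * ∑ m, q k m * y k m
      + c * (γ / p) ^ 2 * ∑ m, q k m * y k m ^ 2)
      = (γ / p) * A + c * (γ / p) ^ 2 * C := by
    rw [Finset.sum_add_distrib, ← Finset.mul_sum, ← Finset.mul_sum, hA, hC]
  have hsumB : ∑ k ∈ Finset.Ico 1 K, γ * y k n / p = (γ / p) * B := by
    rw [hB, Finset.mul_sum]
    exact Finset.sum_congr rfl fun k _ => by ring
  have hmain : (γ / p) * B ≤ Real.log N + (γ / p) * A + c * (γ / p) ^ 2 * C := by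
    have h4 := htel
    rw [hsumS, hW1] at h4
    rw [← hsumB]
    linarith [hlow, h4]
  have hg : 0 < γ / p := div_pos hγ hp
  have hfinal : B - c * γ / p * C - p * Real.log N / γ ≤ A := by
    have h2 : (γ / p) * (B - c * γ / p * C - p * Real.log N / γ) ≤ (γ / p) * A := by
      have heq : (γ / p) * (B - c * γ / p * C - p * Real.log N / γ)
          = (γ / p) * B - c * (γ / p) ^ 2 * C - Real.log N := by
        field_simp
      rw [heq]
      linarith [hmain]
    exact le_of_mul_le_mul_left h2 hg
  exact hfinal
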